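/- Let J = Σ_{ν≥0}(a_ν(x)/ν!)D^ν with deg a_ν ≤ ν, and let k ≥ 0 be an integer. Then J satisfies: J(x^k) = a_0^{[k]} ≠ 0, deg(J(x^{n+k})) = n for all n ≥ 0, and J(x^i) = 0 for 0 ≤ i ≤ k−1, if and only if: (a) a_0 = ⋯ = a_{k−1} = 0; (b) deg a_ν ≤ ν − k for ν ≥ k; and (c) λ_{n+k}^{[k]} := Σ_{ν=0}^{n} C(n+k, n+k−ν) a_{n−ν}^{[n+k−ν]} ≠ 0 for all n ≥ 0. -/

import Mathlib

open Polynomial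

lemma Jpow10 (a : ℕ → Polynomial ℂ) (J : Polynomial ℂ → Polynomial ℂ)
    (hJ : ∀ p, J p = ∑ ν ∈ Finset.range (p.natDegree + 1),
        ((Nat.factorial ν : ℂ))⁻¹ • (a ν * Polynomial.derivative^[ν] p)) (m : ℕ) :
    J (X ^ m) = ∑ ν ∈ Finset.range (m + 1), (m.choose ν : ℂ) • (a ν * X ^ (m - ν)) := by
  rw [hJ, natDegree_X_pow]
  refine Finset.sum_congr rfl fun ν hν => ?_
  rw [iterate_derivative_X_pow_eq_smul, mul_smul_comm, smul_smul]
  congr 1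
  rw [Nat.descFactorial_eq_factorial_mul_choose]
  push_cast
  rw [inv_mul_cancel_left₀]
  exact_mod_cast Nat.factorial_ne_zero ν

lemma Jcoeff10 (a : ℕ → Polynomial ℂ) (J : Polynomial ℂ → Polynomial ℂ)
    (hJ : ∀ p, J p = ∑ ν ∈ Finset.range (p.natDegree + 1),
        ((Nat.factorial ν : ℂ))⁻¹ • (a ν * Polynomial.derivative^[ν] p)) (m j : ℕ) :
    (J (X ^ m)).coeff j = ∑ ν ∈ Finset.range (m + 1),
      (m.choose ν : ℂ) * (if m - ν ≤ j then (a ν).coeff (j - (m - ν)) else 0) := by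
  rw [Jpow10 a J hJ m, finset_sum_coeff]
  refine Finset.sum_congr rfl fun ν hν => ?_
  rw [coeff_smul, smul_eq_mul, coeff_mul_X_pow']

lemma shiftsum10 {M : Type*} [AddCommMonoid M] (g : ℕ → M) (n k : ℕ)
    (h0 : ∀ μ < k, g μ = 0) :
    ∑ μ ∈ Finset.range (n + k + 1), g μ = ∑ i ∈ Finset.range (n + 1), g (k + i) :=
  calc ∑ μ ∈ Finset.range (n + k + 1), g μ
      = ∑ μ ∈ Finset.Ico 0 (n + k + 1), g μ := by rw [Finset.range_eq_Ico]
    _ = ∑ μ ∈ Finset.Ico 0 k, g μ + ∑ μ ∈ Finset.Ico k (n + k + 1), g μ :=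
        (Finset.sum_Ico_consecutive _ (Nat.zero_le k) (by omega)).symm
    _ = ∑ μ ∈ Finset.Ico k (n + k + 1), g μ := by
        rw [Finset.sum_eq_zero fun μ hμ => h0 μ (by simp at hμ; omega), zero_add]
    _ = ∑ i ∈ Finset.range (n + k + 1 - k), g (k + i) := by rw [Finset.sum_Ico_eq_sum_range]
    _ = ∑ i ∈ Finset.range (n + 1), g (k + i) := by rw [show n + k + 1 - k = n + 1 by omega]

theorem stmt10 (a : ℕ → Polynomial ℂ) (hdeg : ∀ ν, (a ν).degree ≤ (ν : ℕ))
    (J : Polynomial ℂ → Polynomial ℂ)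
    (hJ : ∀ p, J p = ∑ ν ∈ Finset.range (p.natDegree + 1),
        ((Nat.factorial ν : ℂ))⁻¹ • (a ν * Polynomial.derivative^[ν] p))
    (k : ℕ) :
    ((J (Polynomial.X ^ k) = Polynomial.C ((a k).coeff 0) ∧ (a k).coeff 0 ≠ 0) ∧
      (∀ n : ℕ, (J (Polynomial.X ^ (n + k))).degree = (n : ℕ)) ∧
      (∀ i < k, J (Polynomial.X ^ i) = 0)) ↔
    ((∀ ν < k, a ν = 0) ∧
      (∀ ν, k ≤ ν → (a ν).degree ≤ ((ν - k : ℕ) : ℕ)) ∧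
      (∀ n : ℕ, (∑ ν ∈ Finset.range (n + 1),
          ((n + k).choose (n + k - ν) : ℂ) * (a (n + k - ν)).coeff (n - ν)) ≠ 0)) := by
  -- key: the top coefficient of J(X^(n+k)) is the λ sum
  have key : ∀ n : ℕ, (J (X ^ (n + k))).coeff n = ∑ ν ∈ Finset.range (n + 1),
      ((n + k).choose (n + k - ν) : ℂ) * (a (n + k - ν)).coeff (n - ν) := by
    intro n
    have hrhs : ∑ ν ∈ Finset.range (n + 1),
        ((n + k).choose (n + k - ν) : ℂ) * (a (n + k - ν)).coeff (n - ν)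
        = ∑ i ∈ Finset.range (n + 1), ((n + k).choose (k + i) : ℂ) * (a (k + i)).coeff i := by
      rw [← Finset.sum_range_reflect
        (fun i => ((n + k).choose (k + i) : ℂ) * (a (k + i)).coeff i) (n + 1)]
      refine Finset.sum_congr rfl fun ν hν => ?_
      simp only [Finset.mem_range] at hν
      rw [show n + 1 - 1 - ν = n - ν by omega, show k + (n - ν) = n + k - ν by omega]
    rw [hrhs, Jcoeff10 a J hJ]
    have h1 : ∀ μ ∈ Finset.range (n + k + 1),
        ((n + k).choose μ : ℂ) * (if n + k - μ ≤ n then (a μ).coeff (n - (n + k - μ)) else 0)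
        = if k ≤ μ then ((n + k).choose μ : ℂ) * (a μ).coeff (μ - k) else 0 := by
      intro μ hμ
      simp only [Finset.mem_range] at hμ
      rcases le_or_gt k μ with h | h
      · rw [if_pos (show n + k - μ ≤ n by omega), if_pos h,
          show n - (n + k - μ) = μ - k by omega]
      · rw [if_neg (by omega), if_neg (by omega), mul_zero]
    rw [Finset.sum_congr rfl h1,
      shiftsum10 (fun μ => if k ≤ μ then ((n + k).choose μ : ℂ) * (a μ).coeff (μ - k) else 0)
        n k (fun μ hμ => if_neg (by omega))]
    refine Finset.sum_congr rfl fun i hi => ?_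
    rw [if_pos (by omega), show k + i - k = i by omega]
  constructor
  · rintro ⟨⟨hJk, hk0⟩, hdegJ, hvan⟩
    -- (a)
    have ha : ∀ i, i < k → a i = 0 := by
      intro i
      induction i using Nat.strong_induction_on with
      | _ i IH =>
        intro hik
        have h0 := hvan i hik
        rw [Jpow10 a J hJ i, Finset.sum_range_succ] at h0
        have hz : ∀ ν ∈ Finset.range i, (i.choose ν : ℂ) • (a ν * X ^ (i - ν)) = 0 := by
          intro ν hν
          simp only [Finset.mem_range] at hν
          rw [IH ν hν (hν.trans hik)]
          simp
        rw [Finset.sum_eq_zero hz, zero_add, Nat.choose_self, Nat.sub_self, pow_zero,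
          mul_one, Nat.cast_one, one_smul] at h0
        exact h0
    refine ⟨ha, ?_, ?_⟩
    · -- (b)
      have hbc : ∀ d, d < k → ∀ ν, (a ν).coeff (ν - d) = 0 := by
        intro d hd ν
        induction ν using Nat.strong_induction_on with
        | _ ν IH =>
          rcases lt_or_ge ν k with h | h
          · rw [ha ν h]; simp
          · have hcz : (J (X ^ ν)).coeff (ν - d) = 0 := by
              have hdg := hdegJ (ν - k)
              rw [show ν - k + k = ν by omega] at hdg
              apply coeff_eq_zero_of_degree_lt
              rw [hdg]
              exact_mod_cast (by omega : ν - k < ν - d)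
            rw [Jcoeff10 a J hJ, Finset.sum_range_succ] at hcz
            have hz : ∀ μ ∈ Finset.range ν,
                (ν.choose μ : ℂ) * (if ν - μ ≤ ν - d then (a μ).coeff (ν - d - (ν - μ)) else 0)
                = 0 := by
              intro μ hμ
              simp only [Finset.mem_range] at hμ
              by_cases hle : ν - μ ≤ ν - d
              · rw [if_pos hle]
                have hdμ : d ≤ μ := by omega
                rw [show ν - d - (ν - μ) = μ - d by omega, IH μ hμ, mul_zero]
              · rw [if_neg hle, mul_zero]
            rw [Finset.sum_eq_zero hz, zero_add, Nat.choose_self, Nat.sub_self,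
              if_pos (Nat.zero_le _), Nat.sub_zero, Nat.cast_one, one_mul] at hcz
            exact hcz
      intro ν hν
      refine (degree_le_iff_coeff_zero _ _).mpr fun m hm => ?_
      have hm' : ν - k < m := by exact_mod_cast hm
      rcases le_or_gt m ν with h | h
      · have := hbc (ν - m) (by omega) ν
        rwa [show ν - (ν - m) = m by omega] at this
      · exact coeff_eq_zero_of_degree_lt (lt_of_le_of_lt (hdeg ν) (by exact_mod_cast h))
    · -- (c)
      intro n
      rw [← key n]
      exact coeff_ne_zero_of_eq_degree (hdegJ n)
  · rintro ⟨ha, hb, hc⟩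
    have hdegle : ∀ n : ℕ, (J (X ^ (n + k))).degree ≤ (n : ℕ) := by
      intro n
      rw [Jpow10 a J hJ]
      refine (degree_sum_le _ _).trans (Finset.sup_le fun ν hν => ?_)
      simp only [Finset.mem_range] at hν
      refine (degree_smul_le _ _).trans ?_
      rcases lt_or_ge ν k with h | h
      · rw [ha ν h, zero_mul, degree_zero]
        exact bot_le
      · refine (degree_mul_le _ _).trans ?_
        refine le_trans (add_le_add (hb ν h) (degree_X_pow _).le) ?_
        rw [← Nat.cast_add, Nat.cast_le]
        omega
    refine ⟨⟨?_, ?_⟩, ?_, ?_⟩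
    · rw [Jpow10 a J hJ, Finset.sum_range_succ]
      have hz : ∀ ν ∈ Finset.range k, (k.choose ν : ℂ) • (a ν * X ^ (k - ν)) = 0 := by
        intro ν hν
        simp only [Finset.mem_range] at hν
        rw [ha ν hν]
        simp
      rw [Finset.sum_eq_zero hz, zero_add, Nat.choose_self, Nat.sub_self, pow_zero,
        mul_one, Nat.cast_one, one_smul]
      have h0 : (a k).degree ≤ 0 := by
        have := hb k le_rfl
        rwa [Nat.sub_self, Nat.cast_zero] at this
      exact eq_C_of_degree_le_zero h0
    · have := hc 0
      simp only [Finset.sum_range_one, Nat.sub_zero, Nat.add_sub_cancel_left,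
        Nat.zero_add] at this
      simpa using this
    · intro n
      refine le_antisymm (hdegle n) (le_degree_of_ne_zero ?_)
      rw [key n]
      exact hc n
    · intro i hik
      rw [Jpow10 a J hJ]
      refine Finset.sum_eq_zero fun ν hν => ?_
      simp only [Finset.mem_range] at hν
      rw [ha ν (by omega)]
      simp
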